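/- Harish-Chandra density identity for SO(2n+1,ℂ): let n ≥ 1, let z_1, …, z_n be complex numbers, and set h_r = cos z_r for r = 1,…,n (complex cosine). Then ∏_{1 ≤ r < s ≤ n} |1 − e^{i(z_r + z_s)}|² · |1 − e^{−i(z_r + z_s)}|² · |1 − e^{i(z_r − z_s)}|² · |1 − e^{−i(z_r − z_s)}|² · ∏_{r=1}^{n} |1 − e^{i z_r}|² · |1 − e^{−i z_r}|² = 2^{2n²} · ∏_{1 ≤ r < s ≤ n} |h_r − h_s|⁴ · ∏_{r=1}^{n} |1 − h_r|², where |·| denotes the complex absolute value, e^w the complex exponential, and cos the complex cosine. -/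

import Mathlib

open Complex Finset

lemma hc_key (w : ℂ) :
    (1 - Complex.exp (Complex.I * w)) * (1 - Complex.exp (-(Complex.I * w))) =
      2 * (1 - Complex.cos w) := by
  have h1 : Complex.I * w = w * Complex.I := mul_comm _ _
  have h2 : Complex.exp (w * Complex.I) * Complex.exp (-(w * Complex.I)) = 1 := by
    rw [← Complex.exp_add, add_neg_cancel, Complex.exp_zero]
  have h3 := Complex.two_cos w
  rw [h1]
  have : Complex.exp (-w * Complex.I) = Complex.exp (-(w * Complex.I)) := by ring_nf
  rw [this] at h3
  linear_combination h2 + h3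

lemma hc_abs (w : ℂ) :
    ‖1 - Complex.exp (Complex.I * w)‖ ^ 2 *
      ‖1 - Complex.exp (-(Complex.I * w))‖ ^ 2 =
    4 * ‖1 - Complex.cos w‖ ^ 2 := by
  rw [← mul_pow, ← norm_mul, hc_key, norm_mul, mul_pow]
  norm_num

lemma hc_cos (a b : ℂ) :
    (1 - Complex.cos (a + b)) * (1 - Complex.cos (a - b)) =
      (Complex.cos a - Complex.cos b) ^ 2 := by
  rw [Complex.cos_add, Complex.cos_sub]
  have ha := Complex.sin_sq_add_cos_sq a
  have hb := Complex.sin_sq_add_cos_sq b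
  linear_combination (-(Complex.sin b ^ 2)) * ha + (Complex.cos a ^ 2 - 1) * hb

lemma card_lt_pairs (n : ℕ) :
    (Finset.univ.filter fun p : Fin n × Fin n => p.1 < p.2).card = n * (n - 1) / 2 := by
  rw [Finset.card_filter, ← Finset.univ_product_univ, Finset.sum_product_right]
  simp only [Finset.sum_boole]
  have h1 : ∀ j : Fin n, (Finset.univ.filter fun i : Fin n => i < j).card = (j : ℕ) := by
    intro j
    have : (Finset.univ.filter fun i : Fin n => i < j) = Finset.Iio j := by
      ext i; simp
    rw [this, Fin.card_Iio]
  push_cast [h1]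
  rw [Fin.sum_univ_eq_sum_range (fun i => i) n, Finset.sum_range_id]

/-- **Harish-Chandra density identity for `SO(2n+1,ℂ)`** (Example 6.7): with
`h_r = cos z_r`,
`∏_{r<s} |1-e^{i(z_r+z_s)}|²|1-e^{-i(z_r+z_s)}|²|1-e^{i(z_r-z_s)}|²|1-e^{-i(z_r-z_s)}|²
  · ∏_r |1-e^{i z_r}|²|1-e^{-i z_r}|²
  = 2^{2n²} ∏_{r<s} |h_r - h_s|⁴ ∏_r |1 - h_r|²`. -/
theorem harish_chandra_density_SO_odd
    (n : ℕ) (hn : 1 ≤ n) (z h : Fin n → ℂ)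
    (hh : ∀ r, h r = Complex.cos (z r)) :
    (∏ p ∈ Finset.univ.filter fun p : Fin n × Fin n => p.1 < p.2,
      ‖1 - Complex.exp (Complex.I * (z p.1 + z p.2))‖ ^ 2 *
        ‖1 - Complex.exp (-(Complex.I * (z p.1 + z p.2)))‖ ^ 2 *
        ‖1 - Complex.exp (Complex.I * (z p.1 - z p.2))‖ ^ 2 *
        ‖1 - Complex.exp (-(Complex.I * (z p.1 - z p.2)))‖ ^ 2) *
      ∏ r : Fin n,
        ‖1 - Complex.exp (Complex.I * z r)‖ ^ 2 *
          ‖1 - Complex.exp (-(Complex.I * z r))‖ ^ 2 =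
    (2 : ℝ) ^ (2 * n ^ 2) *
      (∏ p ∈ Finset.univ.filter fun p : Fin n × Fin n => p.1 < p.2,
        ‖h p.1 - h p.2‖ ^ 4) *
      ∏ r : Fin n, ‖1 - h r‖ ^ 2 := by
  have hpair : ∀ p : Fin n × Fin n,
      ‖1 - Complex.exp (Complex.I * (z p.1 + z p.2))‖ ^ 2 *
        ‖1 - Complex.exp (-(Complex.I * (z p.1 + z p.2)))‖ ^ 2 *
        ‖1 - Complex.exp (Complex.I * (z p.1 - z p.2))‖ ^ 2 *
        ‖1 - Complex.exp (-(Complex.I * (z p.1 - z p.2)))‖ ^ 2 =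
      16 * ‖h p.1 - h p.2‖ ^ 4 := by
    intro p
    have e1 := hc_abs (z p.1 + z p.2)
    have e2 := hc_abs (z p.1 - z p.2)
    have e4 : ‖1 - Complex.cos (z p.1 + z p.2)‖ *
        ‖1 - Complex.cos (z p.1 - z p.2)‖ =
        ‖h p.1 - h p.2‖ ^ 2 := by
      rw [← norm_mul, hc_cos, hh, hh, norm_pow]
    calc ‖1 - Complex.exp (Complex.I * (z p.1 + z p.2))‖ ^ 2 *
          ‖1 - Complex.exp (-(Complex.I * (z p.1 + z p.2)))‖ ^ 2 *
          ‖1 - Complex.exp (Complex.I * (z p.1 - z p.2))‖ ^ 2 *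
          ‖1 - Complex.exp (-(Complex.I * (z p.1 - z p.2)))‖ ^ 2
        = (‖1 - Complex.exp (Complex.I * (z p.1 + z p.2))‖ ^ 2 *
            ‖1 - Complex.exp (-(Complex.I * (z p.1 + z p.2)))‖ ^ 2) *
          (‖1 - Complex.exp (Complex.I * (z p.1 - z p.2))‖ ^ 2 *
            ‖1 - Complex.exp (-(Complex.I * (z p.1 - z p.2)))‖ ^ 2) := by ring
      _ = (4 * ‖1 - Complex.cos (z p.1 + z p.2)‖ ^ 2) *
          (4 * ‖1 - Complex.cos (z p.1 - z p.2)‖ ^ 2) := by rw [e1, e2]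
      _ = 16 * (‖1 - Complex.cos (z p.1 + z p.2)‖ *
            ‖1 - Complex.cos (z p.1 - z p.2)‖) ^ 2 := by ring
      _ = 16 * (‖h p.1 - h p.2‖ ^ 2) ^ 2 := by rw [e4]
      _ = 16 * ‖h p.1 - h p.2‖ ^ 4 := by ring
  have hr : ∀ r : Fin n,
      ‖1 - Complex.exp (Complex.I * z r)‖ ^ 2 *
        ‖1 - Complex.exp (-(Complex.I * z r))‖ ^ 2 =
      4 * ‖1 - h r‖ ^ 2 := by
    intro r; rw [hc_abs, hh]
  rw [Finset.prod_congr rfl fun p _ => hpair p, Finset.prod_congr rfl fun r _ => hr r,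
    Finset.prod_mul_distrib, Finset.prod_mul_distrib, Finset.prod_const, Finset.prod_const,
    card_lt_pairs, Finset.card_univ, Fintype.card_fin]
  have hexp : (16 : ℝ) ^ (n * (n - 1) / 2) * 4 ^ n = 2 ^ (2 * n ^ 2) := by
    have h2 : 2 ∣ n * (n - 1) := by
      rcases Nat.even_or_odd n with he | ho
      · exact Dvd.dvd.mul_right he.two_dvd _
      · exact Dvd.dvd.mul_left (Nat.Odd.sub_odd ho odd_one).two_dvd _
    have : (16 : ℝ) = 2 ^ 4 := by norm_num
    rw [this, show (4 : ℝ) = 2 ^ 2 by norm_num, ← pow_mul, ← pow_mul, ← pow_add]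
    congr 1
    obtain ⟨k, hk⟩ := h2
    have hkn : n * (n - 1) / 2 = k := by omega
    rw [hkn]
    have h1 : 1 ≤ n := hn
    nlinarith [Nat.sub_add_cancel h1, hk]
  rw [← hexp]; ring
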